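/- With V(γ̃) = ½ γ̃ᵀ Rᵀ B⁻¹ R γ̃ + ½ γ̃ᵀ Sᵀ S γ̃ and the dynamics γ̃̇ = -RᵀB F(γ̃ + γ̄) - (RᵀBR + SᵀS)𝐋γ̃ + RᵀBDρ, the derivative of V along solutions equals V̇ = -γ̃ᵀ(Rᵀ F(γ̃ + γ̄) + 𝐋γ̃ - RᵀDρ), i.e., the B-dependence cancels and the bound coincides with that of the single-integrator case. -/

import Mathlib

open scoped RealInnerProductSpace
open ContinuousLinearMap

set_option maxHeartbeats 1000000 in
/-- Along the partial-information double-integrator dynamics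
`γ̃̇ = -RᵀB F(γ̃+γ̄) - (RᵀBR + SᵀS)𝐋γ̃ + RᵀBDρ`, the Lyapunov function
`V(γ̃) = ½γ̃ᵀRᵀB⁻¹Rγ̃ + ½γ̃ᵀSᵀSγ̃` has derivative
`V̇ = -γ̃ᵀ(RᵀF(γ̃+γ̄) + 𝐋γ̃ - RᵀDρ)`: the `B`-dependence cancels. -/
theorem double_integrator_lyapunov_derivative
    (ι κ κ' κ'' : Type*) [Fintype ι] [Fintype κ] [Fintype κ'] [Fintype κ'']
    (R : EuclideanSpace ℝ ι →L[ℝ] EuclideanSpace ℝ κ)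
    (S : EuclideanSpace ℝ ι →L[ℝ] EuclideanSpace ℝ κ')
    (hRS : (adjoint R).comp R + (adjoint S).comp S = ContinuousLinearMap.id ℝ _)
    (hRR : R.comp (adjoint R) = ContinuousLinearMap.id ℝ _)
    (hSS : S.comp (adjoint S) = ContinuousLinearMap.id ℝ _)
    (hRSt : R.comp (adjoint S) = 0)
    (B Binv : EuclideanSpace ℝ κ →L[ℝ] EuclideanSpace ℝ κ)
    (hBBinv : B.comp Binv = ContinuousLinearMap.id ℝ _)
    (hBinvB : Binv.comp B = ContinuousLinearMap.id ℝ _)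
    (hBinvSym : ∀ u w, ⟪Binv u, w⟫ = ⟪u, Binv w⟫)
    (L : EuclideanSpace ℝ ι →L[ℝ] EuclideanSpace ℝ ι)
    (F : EuclideanSpace ℝ ι → EuclideanSpace ℝ κ)
    (γbar : EuclideanSpace ℝ ι)
    (D : EuclideanSpace ℝ κ'' →L[ℝ] EuclideanSpace ℝ κ)
    (γ : ℝ → EuclideanSpace ℝ ι) (ρ : ℝ → EuclideanSpace ℝ κ'')
    (hdyn : ∀ t, HasDerivAt γ
      (-(adjoint R) (B (F (γ t + γbar)))
        - ((adjoint R).comp (B.comp R) + (adjoint S).comp S) (L (γ t))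
        + (adjoint R) (B (D (ρ t)))) t) :
    ∀ t, HasDerivAt
      (fun s => (1 / 2 : ℝ) * ⟪R (γ s), Binv (R (γ s))⟫
              + (1 / 2 : ℝ) * ⟪S (γ s), S (γ s)⟫)
      (-⟪γ t, (adjoint R) (F (γ t + γbar)) + L (γ t) - (adjoint R) (D (ρ t))⟫) t := by

  intro t
  have hγ := hdyn t
  set g := γ t with hg
  set a := F (γ t + γbar) with ha
  set l := L (γ t) with hl
  set r := D (ρ t) with hr
  set d : EuclideanSpace ℝ ι :=
      -(adjoint R) (B a) - ((adjoint R).comp (B.comp R) + (adjoint S).comp S) l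
        + (adjoint R) (B r) with hd
  -- pointwise consequences of the operator identities
  have hRR' : ∀ v, R ((adjoint R) v) = v := fun v => DFunLike.congr_fun hRR v
  have hSS' : ∀ v, S ((adjoint S) v) = v := fun v => DFunLike.congr_fun hSS v
  have hRSt' : ∀ v, R ((adjoint S) v) = 0 := fun v => DFunLike.congr_fun hRSt v
  have hSR : S.comp (adjoint R) = 0 := by
    have h := congrArg (ContinuousLinearMap.adjoint) hRSt
    rwa [adjoint_comp, adjoint_adjoint, map_zero] at h
  have hSR' : ∀ v, S ((adjoint R) v) = 0 := fun v => DFunLike.congr_fun hSR v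
  have hBinv' : ∀ v, Binv (B v) = v := fun v => DFunLike.congr_fun hBinvB v
  have hRS' : ∀ v, (adjoint R) (R v) + (adjoint S) (S v) = v := fun v =>
    DFunLike.congr_fun hRS v
  have hRd : R d = -(B a) - B (R l) + B r := by
    simp [hd, ContinuousLinearMap.add_apply, ContinuousLinearMap.comp_apply,
      hRR', hRSt']
  have hSd : S d = -(S l) := by
    simp [hd, ContinuousLinearMap.add_apply, ContinuousLinearMap.comp_apply,
      hSR', hSS']
  -- derivative computations
  have hγ' : HasDerivAt γ d t := hγ
  have hRγ : HasDerivAt (fun s => R (γ s)) (R d) t :=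
    R.hasFDerivAt.comp_hasDerivAt t hγ'
  have hSγ : HasDerivAt (fun s => S (γ s)) (S d) t :=
    S.hasFDerivAt.comp_hasDerivAt t hγ'
  have hBRγ : HasDerivAt (fun s => Binv (R (γ s))) (Binv (R d)) t :=
    Binv.hasFDerivAt.comp_hasDerivAt t hRγ
  have h1 : HasDerivAt (fun s => ⟪R (γ s), Binv (R (γ s))⟫)
      (⟪R g, Binv (R d)⟫ + ⟪R d, Binv (R g)⟫) t := hRγ.inner ℝ hBRγ
  have h2 : HasDerivAt (fun s => ⟪S (γ s), S (γ s)⟫)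
      (⟪S g, S d⟫ + ⟪S d, S g⟫) t := hSγ.inner ℝ hSγ
  have h := (h1.const_mul ((1:ℝ)/2)).add (h2.const_mul ((1:ℝ)/2))
  have hsym1 : ⟪R g, Binv (R d)⟫ = ⟪R d, Binv (R g)⟫ := by
    rw [← hBinvSym, real_inner_comm]
  have hsym2 : ⟪S g, S d⟫ = ⟪S d, S g⟫ := real_inner_comm _ _
  have eA : ⟪R d, Binv (R g)⟫
      = -⟪g, (adjoint R) a⟫ - ⟪g, (adjoint R) (R l)⟫ + ⟪g, (adjoint R) r⟫ := by
    rw [hRd, ← hBinvSym]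
    simp only [map_add, map_sub, map_neg, hBinv']
    rw [inner_add_left, inner_sub_left, inner_neg_left,
      adjoint_inner_right, adjoint_inner_right, adjoint_inner_right]
    rw [real_inner_comm a, real_inner_comm (R l), real_inner_comm r]
  have eB : ⟪S d, S g⟫ = -⟪g, (adjoint S) (S l)⟫ := by
    rw [hSd, inner_neg_left, adjoint_inner_right, real_inner_comm]
  have eC : ⟪g, (adjoint R) (R l)⟫ + ⟪g, (adjoint S) (S l)⟫ = ⟪g, l⟫ := by
    rw [← inner_add_right, hRS']
  have hval : -⟪g, (adjoint R) a + l - (adjoint R) r⟫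
      = (1:ℝ)/2 * (⟪R g, Binv (R d)⟫ + ⟪R d, Binv (R g)⟫)
        + (1:ℝ)/2 * (⟪S g, S d⟫ + ⟪S d, S g⟫) := by
    rw [hsym1, hsym2, eA, eB, inner_sub_right, inner_add_right]
    linarith [eC]
  have hgoal := hval ▸ h
  convert hgoal using 2 <;> rfl
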